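/- Let N be a finite DAG in which every vertex has a common ancestor with every other vertex (e.g., a network) and which contains no subdivision of K_{2,2} as a subgraph. Then for every pair of vertices u, v, the set of minimal common upper bounds of {u,v} in the reachability order has exactly one element. -/

import Mathlib

/-- A directed path in the digraph with edge relation `E`, from `a` to `b`. -/
structure DirPath {V : Type*} (E : V → V → Prop) (a b : V) where
  verts : List V
  nonempty : verts ≠ []
  head_eq : verts.head? = some a
  last_eq : verts.getLast? = some b
  chain : verts.Chain' E

/-- The set of vertices of a directed path. -/
def DirPath.vset {V : Type*} {E : V → V → Prop} {a b : V} (p : DirPath E a b) : Set V :=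
  {x | x ∈ p.verts}

/-- The digraph `E` contains a subdivision of `K_{2,2}` as a subgraph: two
"roots" `r, r'`, two "leaves" `l, l'`, and four directed paths between them
meeting only at the prescribed endpoints. -/
def HasK22Subdivision {V : Type*} (E : V → V → Prop) : Prop :=
  ∃ (r r' l l' : V) (p1 : DirPath E r l) (p2 : DirPath E r l')
    (p3 : DirPath E r' l) (p4 : DirPath E r' l'),
    r ≠ r' ∧ l ≠ l' ∧ r ≠ l ∧ r ≠ l' ∧ r' ≠ l ∧ r' ≠ l' ∧
    p1.vset ∩ p2.vset = {r} ∧ p3.vset ∩ p4.vset = {r'} ∧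
    p1.vset ∩ p3.vset = {l} ∧ p2.vset ∩ p4.vset = {l'} ∧
    p1.vset ∩ p4.vset = ∅ ∧ p2.vset ∩ p3.vset = ∅

section Helpers
variable {V : Type*} {E : V → V → Prop}

lemma mem_of_head?_eq {L : List V} {a : V} (h : L.head? = some a) : a ∈ L := by
  cases L <;> simp_all

lemma mem_of_getLast?_eq {L : List V} {b : V} (h : L.getLast? = some b) : b ∈ L := by
  obtain ⟨hne, h2⟩ := List.mem_getLast?_eq_getLast (l := L) (x := b) (by rw [h]; rfl)
  rw [h2]
  exact List.getLast_mem hne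

lemma chain'_head_reach : ∀ (L : List V), L.Chain' E → ∀ a, L.head? = some a →
    ∀ x ∈ L, Relation.ReflTransGen E a x := by
  intro L
  induction L with
  | nil => simp
  | cons c rest ih =>
    intro hch a ha x hx
    simp only [List.head?_cons, Option.some.injEq] at ha
    subst ha
    rcases List.mem_cons.mp hx with rfl | hx
    · exact Relation.ReflTransGen.refl
    · match rest, hch, hx with
      | d :: t, hch, hx =>
        have h1 : E c d := (List.isChain_cons_cons.mp hch).1
        have h2 := ih (List.isChain_cons_cons.mp hch).2 d rfl x hx
        exact Relation.ReflTransGen.head h1 h2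

lemma chain'_reach_last : ∀ (L : List V), L.Chain' E → ∀ b, L.getLast? = some b →
    ∀ x ∈ L, Relation.ReflTransGen E x b := by
  intro L
  induction L with
  | nil => simp
  | cons c rest ih =>
    intro hch b hb x hx
    match rest, hch, hb, hx with
    | [], _, hb, hx =>
      simp only [List.getLast?_singleton, Option.some.injEq] at hb
      subst hb
      simp only [List.mem_singleton] at hx
      subst hx; exact Relation.ReflTransGen.refl
    | d :: t, hch, hb, hx =>
      have hb' : (d :: t).getLast? = some b := by
        rw [← hb]; simp [List.getLast?_cons_cons]
      rcases List.mem_cons.mp hx with rfl | hx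
      · exact Relation.ReflTransGen.head (List.isChain_cons_cons.mp hch).1
          (ih (List.isChain_cons_cons.mp hch).2 b hb' d List.mem_cons_self)
      · exact ih (List.isChain_cons_cons.mp hch).2 b hb' x hx

lemma exists_dirPath {a b : V} (h : Relation.ReflTransGen E a b) :
    ∃ L : List V, L ≠ [] ∧ L.head? = some a ∧ L.getLast? = some b ∧ L.Chain' E := by
  induction h with
  | refl => exact ⟨[a], by simp, by simp, by simp, List.isChain_singleton _⟩
  | tail hab hbc ih =>
    rename_i b' c'
    obtain ⟨L, hne, hhd, hlast, hch⟩ := ih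
    refine ⟨L ++ [c'], by simp, ?_, by simp [List.getLast?_concat], ?_⟩
    · rw [List.head?_append_of_ne_nil _ hne]
      exact hhd
    · rw [List.Chain', List.isChain_append]
      refine ⟨hch, by simp, ?_⟩
      intro x hx y hy
      simp only [List.head?_cons, Option.mem_def, Option.some.injEq] at hy
      rw [hlast] at hx
      simp only [Option.mem_def, Option.some.injEq] at hx
      subst hx; subst hy; exact hbc

lemma prefix_until (Q : V → Prop) : ∀ (L : List V), L.Chain' E → ∀ a, L.head? = some a →
    (∃ x ∈ L, Q x) → ∃ (l : V) (L1 : List V), Q l ∧ L1 ≠ [] ∧ L1.head? = some a ∧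
      L1.getLast? = some l ∧ L1.Chain' E ∧ (∀ x ∈ L1, x ∈ L) ∧
      (∀ x ∈ L1, x ≠ l → ¬ Q x) := by
  classical
  intro L
  induction L with
  | nil => simp
  | cons c rest ih =>
    intro hch a ha hex
    simp only [List.head?_cons, Option.some.injEq] at ha
    subst ha
    by_cases hQc : Q c
    · exact ⟨c, [c], hQc, by simp, by simp, by simp, List.isChain_singleton _, by simp, by simp⟩
    · have hex' : ∃ x ∈ rest, Q x := by
        obtain ⟨x, hx, hQx⟩ := hex
        rcases List.mem_cons.mp hx with rfl | hx
        · exact absurd hQx hQc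
        · exact ⟨x, hx, hQx⟩
      match rest, hch, hex' with
      | d :: t, hch, hex' =>
        obtain ⟨l, L1, hQl, hne, hhd, hlast, hch1, hsub, hnotQ⟩ :=
          ih (List.isChain_cons_cons.mp hch).2 d rfl hex'
        refine ⟨l, c :: L1, hQl, by simp, by simp, ?_, ?_, ?_, ?_⟩
        · rw [← hlast]
          match L1, hne with
          | e :: s, _ => simp [List.getLast?_cons_cons]
        · rw [List.Chain', List.isChain_cons]
          refine ⟨?_, hch1⟩
          intro y hy
          rw [hhd] at hy
          simp only [Option.mem_def, Option.some.injEq] at hy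
          subst hy
          exact (List.isChain_cons_cons.mp hch).1
        · intro x hx
          rcases List.mem_cons.mp hx with rfl | hx
          · exact List.mem_cons_self
          · exact List.mem_cons_of_mem _ (hsub x hx)
        · intro x hx hxl
          rcases List.mem_cons.mp hx with rfl | hx
          · exact hQc
          · exact hnotQ x hx hxl

end Helpers

/-- If a finite acyclic digraph in which every two vertices have a common
ancestor contains no `K_{2,2}`-subdivision, then every pair of vertices has a
unique least common ancestor (minimal common ancestor w.r.t. reachability). -/
theorem unique_pairwise_lca_of_no_K22 {V : Type*} [Fintype V] (E : V → V → Prop)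
    (hacyc : ∀ u v : V, Relation.ReflTransGen E u v → Relation.ReflTransGen E v u → u = v)
    (hanc : ∀ u v : V, ∃ w : V, Relation.ReflTransGen E w u ∧ Relation.ReflTransGen E w v)
    (hK : ¬ HasK22Subdivision E) :
    ∀ u v : V, ∃! z : V,
      (Relation.ReflTransGen E z u ∧ Relation.ReflTransGen E z v) ∧
      ∀ w : V, Relation.ReflTransGen E w u → Relation.ReflTransGen E w v →
        Relation.ReflTransGen E z w → w = z := by
  classical
  intro u v
  set r : V → V → Prop := fun a b => Relation.ReflTransGen E b a ∧ a ≠ b with hr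
  haveI : IsTrans V r := by
    constructor
    rintro a b c ⟨hba, hab⟩ ⟨hcb, hbc⟩
    refine ⟨hcb.trans hba, ?_⟩
    rintro rfl
    exact hbc (hacyc b a hba hcb)
  haveI : IsIrrefl V r := ⟨fun a h => h.2 rfl⟩
  have hwf : WellFounded r := Finite.wellFounded_of_trans_of_irrefl r
  obtain ⟨w0, hw0⟩ := hanc u v
  obtain ⟨z, hzS, hzmin⟩ := hwf.has_min
    {w | Relation.ReflTransGen E w u ∧ Relation.ReflTransGen E w v} ⟨w0, hw0⟩
  obtain ⟨hzu, hzv⟩ := hzS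
  have hmin : ∀ w, Relation.ReflTransGen E w u → Relation.ReflTransGen E w v →
      Relation.ReflTransGen E z w → w = z := by
    intro w h1 h2 h3
    by_contra hwz
    exact hzmin w ⟨h1, h2⟩ ⟨h3, hwz⟩
  refine ⟨z, ⟨⟨hzu, hzv⟩, hmin⟩, ?_⟩
  rintro z' ⟨⟨hz'u, hz'v⟩, hmin'⟩
  by_contra hne
  apply hK
  -- four paths: z → u, z' → u, z → v, z' → v
  obtain ⟨Lp, hpne, hphd, hplast, hpch⟩ := exists_dirPath (E := E) hzu
  obtain ⟨Lq, hqne, hqhd, hqlast, hqch⟩ := exists_dirPath (E := E) hz'u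
  obtain ⟨Lp', hp'ne, hp'hd, hp'last, hp'ch⟩ := exists_dirPath (E := E) hzv
  obtain ⟨Lq', hq'ne, hq'hd, hq'last, hq'ch⟩ := exists_dirPath (E := E) hz'v
  have hup : u ∈ Lp := mem_of_getLast?_eq hplast
  have huq : u ∈ Lq := mem_of_getLast?_eq hqlast
  have hvp' : v ∈ Lp' := mem_of_getLast?_eq hp'last
  have hvq' : v ∈ Lq' := mem_of_getLast?_eq hq'last
  -- l : first vertex of Lp lying on Lq
  obtain ⟨l, L1, hlq, h1ne, h1hd, h1last, h1ch, h1sub, h1not⟩ :=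
    prefix_until (E := E) (fun x => x ∈ Lq) Lp hpch z hphd ⟨u, hup, huq⟩
  -- l' : first vertex of Lp' lying on Lq'
  obtain ⟨l', L2, hl'q', h2ne, h2hd, h2last, h2ch, h2sub, h2not⟩ :=
    prefix_until (E := E) (fun x => x ∈ Lq') Lp' hp'ch z hp'hd ⟨v, hvp', hvq'⟩
  -- L3 : prefix of Lq ending at l
  obtain ⟨l2, L3, hl2, h3ne, h3hd, h3last, h3ch, h3sub, -⟩ :=
    prefix_until (E := E) (fun x => x = l) Lq hqch z' hqhd ⟨l, hlq, rfl⟩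
  rw [hl2] at h3last
  -- L4 : prefix of Lq' ending at l'
  obtain ⟨l2, L4, hl2, h4ne, h4hd, h4last, h4ch, h4sub, -⟩ :=
    prefix_until (E := E) (fun x => x = l') Lq' hq'ch z' hq'hd ⟨l', hl'q', rfl⟩
  rw [hl2] at h4last
  -- reachability facts
  have RL1 : ∀ x ∈ L1, Relation.ReflTransGen E z x := chain'_head_reach L1 h1ch z h1hd
  have RL2 : ∀ x ∈ L2, Relation.ReflTransGen E z x := chain'_head_reach L2 h2ch z h2hd
  have RL3 : ∀ x ∈ L3, Relation.ReflTransGen E z' x := chain'_head_reach L3 h3ch z' h3hd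
  have RL4 : ∀ x ∈ L4, Relation.ReflTransGen E z' x := chain'_head_reach L4 h4ch z' h4hd
  have Rq : ∀ x ∈ Lq, Relation.ReflTransGen E x u := chain'_reach_last Lq hqch u hqlast
  have Rq' : ∀ x ∈ Lq', Relation.ReflTransGen E x v := chain'_reach_last Lq' hq'ch v hq'last
  have hlu : Relation.ReflTransGen E l u := Rq l hlq
  have hl'v : Relation.ReflTransGen E l' v := Rq' l' hl'q'
  have reach1u : ∀ x ∈ L1, Relation.ReflTransGen E x u :=
    fun x hx => (chain'_reach_last L1 h1ch l h1last x hx).trans hlu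
  have reach2v : ∀ x ∈ L2, Relation.ReflTransGen E x v :=
    fun x hx => (chain'_reach_last L2 h2ch l' h2last x hx).trans hl'v
  have reach3u : ∀ x ∈ L3, Relation.ReflTransGen E x u :=
    fun x hx => (chain'_reach_last L3 h3ch l h3last x hx).trans hlu
  have reach4v : ∀ x ∈ L4, Relation.ReflTransGen E x v :=
    fun x hx => (chain'_reach_last L4 h4ch l' h4last x hx).trans hl'v
  -- memberships of endpoints
  have hzL1 : z ∈ L1 := mem_of_head?_eq h1hd
  have hzL2 : z ∈ L2 := mem_of_head?_eq h2hd
  have hz'L3 : z' ∈ L3 := mem_of_head?_eq h3hd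
  have hz'L4 : z' ∈ L4 := mem_of_head?_eq h4hd
  have hlL1 : l ∈ L1 := mem_of_getLast?_eq h1last
  have hlL3 : l ∈ L3 := mem_of_getLast?_eq h3last
  have hl'L2 : l' ∈ L2 := mem_of_getLast?_eq h2last
  have hl'L4 : l' ∈ L4 := mem_of_getLast?_eq h4last
  -- distinctness
  have hzz' : z ≠ z' := fun h => hne h.symm
  have hzl : z ≠ l := by
    rintro rfl
    have : Relation.ReflTransGen E z' z := chain'_head_reach Lq hqch z' hqhd z hlq
    exact hne (hmin' z hzu hzv this).symm
  have hzl' : z ≠ l' := by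
    rintro rfl
    have : Relation.ReflTransGen E z' z := chain'_head_reach Lq' hq'ch z' hq'hd z hl'q'
    exact hne (hmin' z hzu hzv this).symm
  have hz'l : z' ≠ l := by
    rintro rfl
    exact hne ((hmin z' hz'u hz'v (RL1 z' hlL1)).symm ▸ rfl)
  have hz'l' : z' ≠ l' := by
    rintro rfl
    exact hne ((hmin z' hz'u hz'v (RL2 z' hl'L2)).symm ▸ rfl)
  have hll' : l ≠ l' := by
    rintro rfl
    exact hzl (hmin l hlu hl'v (RL1 l hlL1)).symm
  -- the four directed paths
  refine ⟨z, z', l, l', ⟨L1, h1ne, h1hd, h1last, h1ch⟩, ⟨L2, h2ne, h2hd, h2last, h2ch⟩,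
    ⟨L3, h3ne, h3hd, h3last, h3ch⟩, ⟨L4, h4ne, h4hd, h4last, h4ch⟩,
    hzz', hll', hzl, hzl', hz'l, hz'l', ?_, ?_, ?_, ?_, ?_, ?_⟩
  · ext x
    simp only [DirPath.vset, Set.mem_inter_iff, Set.mem_setOf_eq, Set.mem_singleton_iff]
    constructor
    · rintro ⟨hx1, hx2⟩
      exact hmin x (reach1u x hx1) (reach2v x hx2) (RL1 x hx1)
    · rintro rfl
      exact ⟨hzL1, hzL2⟩
  · ext x
    simp only [DirPath.vset, Set.mem_inter_iff, Set.mem_setOf_eq, Set.mem_singleton_iff]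
    constructor
    · rintro ⟨hx3, hx4⟩
      exact hmin' x (reach3u x hx3) (reach4v x hx4) (RL3 x hx3)
    · rintro rfl
      exact ⟨hz'L3, hz'L4⟩
  · ext x
    simp only [DirPath.vset, Set.mem_inter_iff, Set.mem_setOf_eq, Set.mem_singleton_iff]
    constructor
    · rintro ⟨hx1, hx3⟩
      by_contra hxl
      exact h1not x hx1 hxl (h3sub x hx3)
    · rintro rfl
      exact ⟨hlL1, hlL3⟩
  · ext x
    simp only [DirPath.vset, Set.mem_inter_iff, Set.mem_setOf_eq, Set.mem_singleton_iff]
    constructor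
    · rintro ⟨hx2, hx4⟩
      by_contra hxl'
      exact h2not x hx2 hxl' (h4sub x hx4)
    · rintro rfl
      exact ⟨hl'L2, hl'L4⟩
  · rw [Set.eq_empty_iff_forall_notMem]
    rintro x ⟨hx1, hx4⟩
    simp only [DirPath.vset, Set.mem_setOf_eq] at hx1 hx4
    have e1 : x = z := hmin x (reach1u x hx1) (reach4v x hx4) (RL1 x hx1)
    have e2 : x = z' := hmin' x (reach1u x hx1) (reach4v x hx4) (RL4 x hx4)
    exact hzz' (e1 ▸ e2)
  · rw [Set.eq_empty_iff_forall_notMem]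
    rintro x ⟨hx2, hx3⟩
    simp only [DirPath.vset, Set.mem_setOf_eq] at hx2 hx3
    have e1 : x = z := hmin x (reach3u x hx3) (reach2v x hx2) (RL2 x hx2)
    have e2 : x = z' := hmin' x (reach3u x hx3) (reach2v x hx2) (RL3 x hx3)
    exact hzz' (e1 ▸ e2)
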